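/- Let δ ∈ (0,1], L_A > 0 and μ_A > 0, and assume f is L_A-smooth and μ_A-strongly convex with respect to the atomic norm on lin(A). Let x⋆ ∈ lin(A) be a minimizer of f over lin(A). Starting from x₀ ∈ lin(A), define iterates by choosing z_t ∈ A with ⟨∇f(x_t), z_t⟩ ≤ δ · min_{z∈A} ⟨∇f(x_t), z⟩ and setting x_{t+1} = x_t − (⟨∇f(x_t), z_t⟩/L_A)·z_t. Then, writing ε_t := f(x_t) − f(x⋆), for every t ≥ 0: ε_{t+1} ≤ (1 − δ²·μ_A/L_A)·ε_t. -/

import Mathlib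

open Submodule Set Pointwise RealInnerProductSpace

set_option maxHeartbeats 1000000

/-- Theorem 5, Part 1: linear rate of affine invariant generalized
matching pursuit with a `δ`-approximate LMO for `f` that is `L_A`-smooth and
`μ_A`-strongly convex w.r.t. the atomic norm on `lin(A)`. -/
theorem stmt_3 {H : Type*} [NormedAddCommGroup H] [InnerProductSpace ℝ H] [CompleteSpace H]
    (A : Set H) (hA : IsCompact A) (hsym : ∀ z ∈ A, -z ∈ A)
    (f : H → ℝ) (f' : H → H) (hgrad : ∀ x, HasGradientAt f (f' x) x)
    (hconv : ConvexOn ℝ univ f)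
    (habs : ∀ x ∈ span ℝ A, ∃ c : ℝ, 0 < c ∧ x ∈ c • convexHull ℝ A)
    (hpos : ∀ x ∈ span ℝ A, x ≠ 0 → 0 < gauge (convexHull ℝ A) x)
    (δ LA μA : ℝ) (hδ0 : 0 < δ) (hδ1 : δ ≤ 1) (hLA : 0 < LA) (hμA : 0 < μA)
    (hsmooth : ∀ x ∈ span ℝ A, ∀ z ∈ span ℝ A, gauge (convexHull ℝ A) z = 1 →
      ∀ γ : ℝ, 0 < γ → f (x + γ • z) ≤ f x + γ * ⟪f' x, z⟫ + LA / 2 * γ ^ 2)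
    (hstrong : ∀ x ∈ span ℝ A, ∀ y ∈ span ℝ A,
      f x + ⟪f' x, y - x⟫ + μA / 2 * gauge (convexHull ℝ A) (y - x) ^ 2 ≤ f y)
    (xs : H) (hxs : xs ∈ span ℝ A) (hmin : ∀ y ∈ span ℝ A, f xs ≤ f y)
    (x z : ℕ → H)
    (hx0 : x 0 ∈ span ℝ A)
    (hzA : ∀ t, z t ∈ A)
    (hlmo : ∀ t, ⟪f' (x t), z t⟫ ≤ δ * sInf ((fun w => ⟪f' (x t), w⟫) '' A))
    (hupd : ∀ t, x (t + 1) = x t - (⟪f' (x t), z t⟫ / LA) • z t) :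
    ∀ t : ℕ, f (x (t + 1)) - f xs ≤ (1 - δ ^ 2 * μA / LA) * (f (x t) - f xs) := by
  set S := convexHull ℝ A with hSdef
  have hAS : A ⊆ S := subset_convexHull ℝ A
  have hxspan : ∀ s, x s ∈ span ℝ A := by
    intro s
    induction s with
    | zero => exact hx0
    | succ n ih =>
      rw [hupd n]
      exact sub_mem ih (smul_mem _ _ (subset_span (hzA n)))
  intro t
  set g := f' (x t) with hg
  set ct := (⟪g, z t⟫ : ℝ) with hct
  have hcont : Continuous fun w : H => (⟪g, w⟫ : ℝ) :=
    Continuous.inner continuous_const continuous_id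
  have hbdd : BddBelow ((fun w => (⟪g, w⟫ : ℝ)) '' A) := (hA.image hcont).bddBelow
  set m := sInf ((fun w => (⟪g, w⟫ : ℝ)) '' A) with hm
  have hm_le : ∀ w ∈ A, m ≤ ⟪g, w⟫ := fun w hw => csInf_le hbdd ⟨w, hw, rfl⟩
  have hm0 : m ≤ 0 := by
    have h1 := hm_le (z t) (hzA t)
    have h2 := hm_le (-(z t)) (hsym _ (hzA t))
    rw [inner_neg_right] at h2
    linarith
  have hmhull : ∀ u ∈ S, m ≤ ⟪g, u⟫ := by
    intro u hu
    have hlin : IsLinearMap ℝ fun w : H => (⟪g, w⟫ : ℝ) :=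
      ⟨fun a b => inner_add_right _ _ _, fun c y => real_inner_smul_right g y c⟩
    exact convexHull_min hm_le (convex_halfSpace_ge hlin m) hu
  -- dual pairing bound
  have hdual : ∀ y ∈ span ℝ A, gauge S y * m ≤ ⟪g, y⟫ := by
    intro y hy
    refine _root_.le_of_forall_pos_le_add ?_
    intro ε hε
    rcases eq_or_lt_of_le hm0 with hmz | hmz
    · obtain ⟨c, hc, u, hu, rfl⟩ := habs y hy
      have h1 : (0:ℝ) ≤ c * ⟪g, u⟫ := by
        have := hmhull u hu
        nlinarith
      rw [real_inner_smul_right, hmz, mul_zero]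
      linarith
    · set e := ε / (-m) with he
      have he0 : 0 < e := div_pos hε (by linarith)
      have hem : e * m = -ε := by
        have h := div_mul_cancel₀ ε (show (-m) ≠ 0 by linarith)
        have h2 : ε / -m * -m = -(ε / -m * m) := by ring
        rw [he]
        linarith
      have hne : {r : ℝ | r ∈ Set.Ioi (0:ℝ) ∧ y ∈ r • S}.Nonempty := by
        obtain ⟨c, hc, hyc⟩ := habs y hy
        exact ⟨c, hc, hyc⟩
      have hlt : sInf {r : ℝ | r ∈ Set.Ioi (0:ℝ) ∧ y ∈ r • S} < gauge S y + e := by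
        rw [← gauge_def]
        linarith
      obtain ⟨c, ⟨hc0, hyc⟩, hclt⟩ := exists_lt_of_csInf_lt hne hlt
      obtain ⟨u, hu, rfl⟩ := hyc
      have h1 : c * m ≤ c * ⟪g, u⟫ :=
        mul_le_mul_of_nonneg_left (hmhull u hu) (le_of_lt (by exact hc0))
      have h2 : (gauge S (c • u) + e) * m ≤ c * m :=
        mul_le_mul_of_nonpos_right (le_of_lt hclt) (le_of_lt hmz)
      rw [real_inner_smul_right]
      nlinarith
  -- descent step
  have hctm : ct ≤ δ * m := hlmo t
  have hδm0 : δ * m ≤ 0 := mul_nonpos_of_nonneg_of_nonpos (le_of_lt hδ0) hm0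
  have hct0 : ct ≤ 0 := le_trans hctm hδm0
  have hstep : f (x (t + 1)) ≤ f (x t) - ct ^ 2 / (2 * LA) := by
    rcases eq_or_lt_of_le hct0 with hc0 | hc0
    · have hx1 : x (t + 1) = x t := by
        rw [hupd t, show (⟪f' (x t), z t⟫ : ℝ) = 0 from hc0]
        simp
      rw [hx1, hc0]
      simp
    · have hzne : z t ≠ 0 := by
        intro h
        rw [hct, h, inner_zero_right] at hc0
        exact lt_irrefl 0 hc0
      set a := gauge S (z t) with ha
      have ha0 : 0 < a := hpos (z t) (subset_span (hzA t)) hzne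
      have ha1 : a ≤ 1 := gauge_le_one_of_mem (hAS (hzA t))
      have hainv : a * a⁻¹ = 1 := mul_inv_cancel₀ (ne_of_gt ha0)
      have hg1 : gauge S (a⁻¹ • z t) = 1 := by
        rw [gauge_smul_of_nonneg (inv_nonneg.mpr (le_of_lt ha0)), smul_eq_mul, ← ha,
          inv_mul_cancel₀ (ne_of_gt ha0)]
      have hzzspan : a⁻¹ • z t ∈ span ℝ A := smul_mem _ _ (subset_span (hzA t))
      have hγ0 : 0 < -ct / LA * a := mul_pos (div_pos (neg_pos.mpr hc0) hLA) ha0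
      have hsm := hsmooth (x t) (hxspan t) (a⁻¹ • z t) hzzspan hg1 (-ct / LA * a) hγ0
      have hscal : -ct / LA * a * a⁻¹ = -(ct / LA) := by
        rw [mul_assoc, hainv, mul_one]
        ring
      have hx1 : x t + (-ct / LA * a) • a⁻¹ • z t = x (t + 1) := by
        rw [hupd t, smul_smul, hscal]
        show x t + (-(ct / LA)) • z t = x t - (ct / LA) • z t
        rw [neg_smul, ← sub_eq_add_neg]
      rw [hx1, real_inner_smul_right, ← hct] at hsm
      clear_value ct a
      have hkey : -ct / LA * a * (a⁻¹ * ct) + LA / 2 * (-ct / LA * a) ^ 2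
          ≤ -(ct ^ 2 / (2 * LA)) := by
        have e1 : -ct / LA * a * (a⁻¹ * ct) = -(ct ^ 2 / LA) * (a * a⁻¹) := by ring
        have e2 : LA / 2 * (-ct / LA * a) ^ 2 = ct ^ 2 / (2 * LA) * a ^ 2 := by
          field_simp
        rw [e1, hainv, mul_one, e2]
        have hc2 : 0 ≤ ct ^ 2 / (2 * LA) := by positivity
        have ha2 : a ^ 2 ≤ 1 := by nlinarith
        have h3 : ct ^ 2 / (2 * LA) * a ^ 2 ≤ ct ^ 2 / (2 * LA) := by nlinarith
        have e3 : ct ^ 2 / LA = ct ^ 2 / (2 * LA) + ct ^ 2 / (2 * LA) := by ring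
        linarith
      linarith
  -- strong convexity bound
  have hεb : f (x t) - f xs ≤ m ^ 2 / (2 * μA) := by
    set h := gauge S (xs - x t) with hh
    have hsc : f (x t) + (⟪g, xs - x t⟫ : ℝ) + μA / 2 * h ^ 2 ≤ f xs :=
      hstrong (x t) (hxspan t) xs hxs
    have hh0 : 0 ≤ h := gauge_nonneg _
    have hd : h * m ≤ ⟪g, xs - x t⟫ := hdual (xs - x t) (sub_mem hxs (hxspan t))
    have hkey : -(h * m) - μA / 2 * h ^ 2 ≤ m ^ 2 / (2 * μA) := by
      rw [le_div_iff₀ (by positivity : (0:ℝ) < 2 * μA)]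
      nlinarith [sq_nonneg (μA * h + m)]
    linarith
  -- assemble
  clear_value ct m
  have hct2 : δ ^ 2 * m ^ 2 ≤ ct ^ 2 := by
    nlinarith [hctm, hδm0, hct0, sq_nonneg (ct - δ * m), sq_nonneg (ct + δ * m)]
  have h1 : δ ^ 2 * μA / LA * (f (x t) - f xs) ≤ δ ^ 2 * μA / LA * (m ^ 2 / (2 * μA)) :=
    mul_le_mul_of_nonneg_left hεb (by positivity)
  have h2 : δ ^ 2 * μA / LA * (m ^ 2 / (2 * μA)) = δ ^ 2 * m ^ 2 / (2 * LA) := by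
    field_simp
  have h3 : δ ^ 2 * m ^ 2 / (2 * LA) ≤ ct ^ 2 / (2 * LA) := by gcongr
  have hexp : (1 - δ ^ 2 * μA / LA) * (f (x t) - f xs)
      = (f (x t) - f xs) - δ ^ 2 * μA / LA * (f (x t) - f xs) := by ring
  linarith [h1, h2 ▸ h1, h3, hstep, hexp]
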